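/- Let (S, μ, η) be a monad on C equipped with a differential combinator transformation ∂. Let (A, α) be an S-algebra (α : S(A) → A with α∘η_A = 1_A and α∘μ_A = α∘S(α)), and let β := ⟨α∘S(π₁), α∘S(π₁+π₄)∘∂_{A×A}⟩ : S(A×A) → A×A be the tangent-bundle S-algebra structure on A×A. Call a morphism D : A → A an S-derivation on (A, α) if D∘α = α∘S(π₁ + D∘π₂)∘∂_A. Then the assignments v ↦ π₂∘v and D ↦ ⟨1_A, D⟩ are mutually inverse bijections between (a) morphisms v : A → A×A with π₁∘v = 1_A and v∘α = β∘S(v) (i.e. vector fields on (A, α), sections of the projection that are S-algebra morphisms), and (b) S-derivations D on (A, α). -/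
import Mathlib


open CategoryTheory CategoryTheory.Limits

universe v u

variable {C : Type u} [Category.{v} C] [Preadditive C] [HasBinaryBiproducts C]

/-- A differential combinator transformation on a monad `S`. -/
structure DiffCombTrans (S : Monad C) where
  d : ∀ A : C, S.obj A ⟶ S.obj (A ⊞ A)
  natural : ∀ {A B : C} (f : A ⟶ B), S.map f ≫ d B = d A ≫ S.map (biprod.map f f)
  dc1 : ∀ A : C, d A ≫ S.map biprod.fst = 0
  dc2 : ∀ A : C,
    d A ≫ S.map (biprod.lift biprod.fst (biprod.lift biprod.snd biprod.snd)) =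
      d A ≫ S.map (biprod.lift biprod.fst (biprod.lift biprod.snd 0)) +
      d A ≫ S.map (biprod.lift biprod.fst (biprod.lift 0 biprod.snd))
  dc3 : ∀ A : C, S.η.app A ≫ d A = biprod.lift 0 (𝟙 A) ≫ S.η.app (A ⊞ A)
  dc4 : ∀ A : C, S.μ.app A ≫ d A =
    d (S.obj A) ≫
      S.map (biprod.fst ≫ S.map (biprod.lift (𝟙 A) 0) + biprod.snd ≫ d A) ≫
      S.μ.app (A ⊞ A)
  dc5 : ∀ A : C, d A ≫ d (A ⊞ A) ≫
      S.map (biprod.lift (biprod.fst ≫ biprod.fst) (biprod.snd ≫ biprod.snd)) = d A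
  dc6 : ∀ A : C, d A ≫ d (A ⊞ A) ≫
      S.map (biprod.lift
        (biprod.lift (biprod.fst ≫ biprod.fst) (biprod.snd ≫ biprod.fst))
        (biprod.lift (biprod.fst ≫ biprod.snd) (biprod.snd ≫ biprod.snd))) =
      d A ≫ d (A ⊞ A)

/-- `λ_A := ⟨S(π₁), S(π₁+π₄) ∘ ∂_{A×A}⟩ : S(A×A) ⟶ S(A) × S(A)`. -/
noncomputable def lamOf (S : Monad C) (p : DiffCombTrans S) (A : C) :
    S.obj (A ⊞ A) ⟶ S.obj A ⊞ S.obj A :=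
  biprod.lift (S.map biprod.fst)
    (p.d (A ⊞ A) ≫ S.map (biprod.fst ≫ biprod.fst + biprod.snd ≫ biprod.snd))

/-- Vector fields on an `S`-algebra `(A, α)` correspond bijectively to
`S`-derivations `D : A ⟶ A` on `(A, α)`, via `v ↦ π₂ ∘ v` and `D ↦ ⟨1_A, D⟩`. -/
theorem vectorField_equiv_derivation (S : Monad C) (p : DiffCombTrans S)
    (A : C) (α : S.obj A ⟶ A)
    (hα1 : S.η.app A ≫ α = 𝟙 A) (hα2 : S.μ.app A ≫ α = S.map α ≫ α) :
    -- the tangent-bundle `S`-algebra structure on `A × A`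
    let β : S.obj (A ⊞ A) ⟶ A ⊞ A :=
      biprod.lift (S.map biprod.fst ≫ α)
        (p.d (A ⊞ A) ≫ S.map (biprod.fst ≫ biprod.fst + biprod.snd ≫ biprod.snd) ≫ α)
    -- (a) → (b), and `D ↦ ⟨1_A, D⟩` is a left inverse of `v ↦ π₂ ∘ v`
    (∀ v : A ⟶ A ⊞ A, v ≫ biprod.fst = 𝟙 A → α ≫ v = S.map v ≫ β →
      (α ≫ (v ≫ biprod.snd) =
          p.d A ≫ S.map (biprod.fst + biprod.snd ≫ (v ≫ biprod.snd)) ≫ α) ∧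
        biprod.lift (𝟙 A) (v ≫ biprod.snd) = v) ∧
    -- (b) → (a), and `v ↦ π₂ ∘ v` is a left inverse of `D ↦ ⟨1_A, D⟩`
    (∀ D : A ⟶ A, α ≫ D = p.d A ≫ S.map (biprod.fst + biprod.snd ≫ D) ≫ α →
      (biprod.lift (𝟙 A) D ≫ biprod.fst = 𝟙 A ∧
        α ≫ biprod.lift (𝟙 A) D = S.map (biprod.lift (𝟙 A) D) ≫ β) ∧
        biprod.lift (𝟙 A) D ≫ biprod.snd = D) := by

  intro β
  have key : ∀ w : A ⟶ A ⊞ A, w ≫ biprod.fst = 𝟙 A →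
      biprod.map w w ≫ (biprod.fst ≫ biprod.fst + biprod.snd ≫ biprod.snd) =
        biprod.fst + biprod.snd ≫ (w ≫ biprod.snd) := by
    intro w hw
    simp only [Preadditive.comp_add, biprod.map_fst_assoc, biprod.map_snd_assoc]
    rw [hw, Category.comp_id]
  constructor
  · intro v hv1 hv2
    constructor
    · have h2 := congrArg (· ≫ biprod.snd) hv2
      simp only [Category.assoc, biprod.lift_snd, β] at h2
      rw [h2, ← Category.assoc, p.natural v, Category.assoc, ← Category.assoc (S.map _),
        ← S.map_comp, key v hv1]
    · apply biprod.hom_ext <;> simp [hv1]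
  · intro D hD
    refine ⟨⟨by simp, ?_⟩, by simp⟩
    apply biprod.hom_ext
    · simp only [Category.assoc, biprod.lift_fst, β]
      rw [← Category.assoc, ← S.map_comp]
      simp
    · simp only [Category.assoc, biprod.lift_snd, β]
      rw [← Category.assoc (S.map _), p.natural, Category.assoc,
        ← Category.assoc (S.map _), ← S.map_comp, key _ (by simp), biprod.lift_snd, hD]
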